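/- Let G ⊆ ℝⁿ be a bounded domain, (b^{jk}) a symmetric C¹ matrix field on closure(G), ψ ∈ C²(closure(G)) satisfying Condition (B)(i) with constant μ₀ > 0, and let λ > 0, c₀ > 0, c₁ > 0. Define ℓ(t,x) = λ(ψ(x) − c₁t²), Ψ(x) = ℓ_{tt} + Σ_{j,k}(b^{jk}ℓ_{x_j})_{x_k} − c₀λ, and for each j,k, c^{jk} = (b^{jk}ℓ_t)_t + Σ_{j',k'}[2b^{jk'}(b^{j'k}ℓ_{x_{j'}})_{x_{k'}} − (b^{jk}b^{j'k'}ℓ_{x_{j'}})_{x_{k'}}] + Ψ b^{jk}. Then for every t ∈ ℝ, x ∈ closure(G) and ξ ∈ ℝⁿ, Σ_{j,k=1}^n c^{jk}(t,x) ξ_j ξ_k ≥ λ(μ₀ − 4c₁ − c₀) Σ_{j,k=1}^n b^{jk}(x) ξ_j ξ_k. -/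

import Mathlib

open scoped BigOperators

/-- The partial derivative `∂f/∂x_j` at `x`. -/
noncomputable def partialDeriv3 {n : ℕ} (f : EuclideanSpace ℝ (Fin n) → ℝ) (j : Fin n)
    (x : EuclideanSpace ℝ (Fin n)) : ℝ :=
  fderiv ℝ f x (EuclideanSpace.single j 1)

/-- The Carleman weight exponent `ℓ(t,x) = λ(ψ(x) − c₁ t²)`. -/
noncomputable def ell3 {n : ℕ} (lam c₁ : ℝ) (ψ : EuclideanSpace ℝ (Fin n) → ℝ)
    (t : ℝ) (x : EuclideanSpace ℝ (Fin n)) : ℝ :=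
  lam * (ψ x - c₁ * t ^ 2)

/-- `ℓ_t(t,x)`. -/
noncomputable def ellt3 {n : ℕ} (lam c₁ : ℝ) (ψ : EuclideanSpace ℝ (Fin n) → ℝ)
    (t : ℝ) (x : EuclideanSpace ℝ (Fin n)) : ℝ :=
  deriv (fun s => ell3 lam c₁ ψ s x) t

/-- `ℓ_{tt}(t,x)`. -/
noncomputable def elltt3 {n : ℕ} (lam c₁ : ℝ) (ψ : EuclideanSpace ℝ (Fin n) → ℝ)
    (t : ℝ) (x : EuclideanSpace ℝ (Fin n)) : ℝ :=
  deriv (fun s => ellt3 lam c₁ ψ s x) t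

/-- `Ψ = ℓ_{tt} + Σ_{j,k} (b^{jk} ℓ_{x_j})_{x_k} − c₀ λ`. -/
noncomputable def Psi3 {n : ℕ} (b : EuclideanSpace ℝ (Fin n) → Fin n → Fin n → ℝ)
    (ψ : EuclideanSpace ℝ (Fin n) → ℝ) (lam c₀ c₁ : ℝ)
    (t : ℝ) (x : EuclideanSpace ℝ (Fin n)) : ℝ :=
  elltt3 lam c₁ ψ t x
    + ∑ j, ∑ k, partialDeriv3 (fun y => b y j k * partialDeriv3 (ell3 lam c₁ ψ t) j y) k x
    - c₀ * lam

/-- `c^{jk} = (b^{jk}ℓ_t)_t + Σ_{j',k'}[2b^{jk'}(b^{j'k}ℓ_{x_{j'}})_{x_{k'}}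
  − (b^{jk}b^{j'k'}ℓ_{x_{j'}})_{x_{k'}}] + Ψ b^{jk}`. -/
noncomputable def cjk3 {n : ℕ} (b : EuclideanSpace ℝ (Fin n) → Fin n → Fin n → ℝ)
    (ψ : EuclideanSpace ℝ (Fin n) → ℝ) (lam c₀ c₁ : ℝ)
    (t : ℝ) (x : EuclideanSpace ℝ (Fin n)) (j k : Fin n) : ℝ :=
  deriv (fun s => b x j k * ellt3 lam c₁ ψ s x) t
    + ∑ j', ∑ k',
        (2 * b x j k' * partialDeriv3 (fun y => b y j' k * partialDeriv3 (ell3 lam c₁ ψ t) j' y) k' x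
          - partialDeriv3 (fun y => b y j k * b y j' k' * partialDeriv3 (ell3 lam c₁ ψ t) j' y) k' x)
    + Psi3 b ψ lam c₀ c₁ t x * b x j k

/-- Condition (B)(i): the pseudoconvexity inequality with constant `μ₀` on the set `S`. -/
def CondBi3 {n : ℕ} (b : EuclideanSpace ℝ (Fin n) → Fin n → Fin n → ℝ)
    (ψ : EuclideanSpace ℝ (Fin n) → ℝ) (μ₀ : ℝ) (S : Set (EuclideanSpace ℝ (Fin n))) : Prop :=
  ∀ x ∈ S, ∀ ξ : Fin n → ℝ,
    μ₀ * ∑ j, ∑ k, b x j k * ξ j * ξ k ≤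
      ∑ j, ∑ k, (∑ j', ∑ k',
        (2 * b x j k' * partialDeriv3 (fun y => b y j' k * partialDeriv3 ψ j' y) k' x
          - partialDeriv3 (fun y => b y j k) k' x * b x j' k' * partialDeriv3 ψ j' x))
        * ξ j * ξ k

lemma pd3_const_mul {n : ℕ} (f : EuclideanSpace ℝ (Fin n) → ℝ) (c : ℝ) (j : Fin n)
    (x : EuclideanSpace ℝ (Fin n)) (hf : DifferentiableAt ℝ f x) :
    partialDeriv3 (fun y => c * f y) j x = c * partialDeriv3 f j x := by
  unfold partialDeriv3
  rw [fderiv_const_mul hf]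
  simp

lemma pd3_mul {n : ℕ} (f g : EuclideanSpace ℝ (Fin n) → ℝ) (j : Fin n)
    (x : EuclideanSpace ℝ (Fin n)) (hf : DifferentiableAt ℝ f x)
    (hg : DifferentiableAt ℝ g x) :
    partialDeriv3 (fun y => f y * g y) j x
      = f x * partialDeriv3 g j x + partialDeriv3 f j x * g x := by
  unfold partialDeriv3
  rw [fderiv_fun_mul hf hg]
  simp [mul_comm]

lemma sum2_sub {n : ℕ} (f g : Fin n → Fin n → ℝ) :
    ∑ j, ∑ k, (f j k - g j k) = (∑ j, ∑ k, f j k) - ∑ j, ∑ k, g j k := by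
  simp [Finset.sum_sub_distrib]

lemma sum2_mul {n : ℕ} (c : ℝ) (f : Fin n → Fin n → ℝ) :
    ∑ j, ∑ k, c * f j k = c * ∑ j, ∑ k, f j k := by
  simp [Finset.mul_sum]


/-- the lower bound `Σ c^{jk} ξ_j ξ_k ≥ λ(μ₀ − 4c₁ − c₀) Σ b^{jk} ξ_j ξ_k`
for all `t ∈ ℝ`, `x ∈ closure G` and `ξ ∈ ℝⁿ`. -/
theorem stmt_3 {n : ℕ} (G : Set (EuclideanSpace ℝ (Fin n)))
    (hGopen : IsOpen G) (hGconn : IsConnected G) (hGbdd : Bornology.IsBounded G)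
    (b : EuclideanSpace ℝ (Fin n) → Fin n → Fin n → ℝ)
    (hbC1 : ∀ j k, ContDiff ℝ 1 (fun x => b x j k))
    (hbsymm : ∀ x j k, b x j k = b x k j)
    (ψ : EuclideanSpace ℝ (Fin n) → ℝ) (hψC2 : ContDiff ℝ 2 ψ)
    (μ₀ : ℝ) (hμ₀ : 0 < μ₀) (hB1 : CondBi3 b ψ μ₀ (closure G))
    (lam c₀ c₁ : ℝ) (hlam : 0 < lam) (hc₀ : 0 < c₀) (hc₁ : 0 < c₁) :
    ∀ t : ℝ, ∀ x ∈ closure G, ∀ ξ : Fin n → ℝ,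
      lam * (μ₀ - 4 * c₁ - c₀) * ∑ j, ∑ k, b x j k * ξ j * ξ k ≤
        ∑ j, ∑ k, cjk3 b ψ lam c₀ c₁ t x j k * ξ j * ξ k := by
  intro t x hx ξ
  have hψd : ∀ j : Fin n, Differentiable ℝ (fun y => partialDeriv3 ψ j y) := by
    intro j
    have h1 : ContDiff ℝ 1 (fderiv ℝ ψ) := hψC2.fderiv_right (le_refl 2)
    have h2 : ContDiff ℝ 1 (fun y => fderiv ℝ ψ y (EuclideanSpace.single j 1)) :=
      h1.clm_apply contDiff_const
    exact h2.differentiable one_ne_zero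
  have hbd : ∀ j k, Differentiable ℝ (fun y => b y j k) :=
    fun j k => (hbC1 j k).differentiable one_ne_zero
  have hψdiff : Differentiable ℝ ψ := hψC2.differentiable (by norm_num)
  -- t-derivatives
  have hellt : ∀ s : ℝ, ellt3 lam c₁ ψ s x = -(2 * lam * c₁) * s := by
    intro s
    unfold ellt3 ell3
    have h : HasDerivAt (fun s : ℝ => lam * (ψ x - c₁ * s ^ 2)) (-(2 * lam * c₁) * s) s := by
      have := (((hasDerivAt_pow 2 s).const_mul c₁).const_sub (ψ x)).const_mul lam
      refine this.congr_deriv ?_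
      push_cast
      ring
    exact h.deriv
  have helltt : elltt3 lam c₁ ψ t x = -(2 * lam * c₁) := by
    unfold elltt3
    have h : (fun s => ellt3 lam c₁ ψ s x) = fun s : ℝ => -(2 * lam * c₁) * s :=
      funext hellt
    rw [h]
    simpa using ((hasDerivAt_id t).const_mul (-(2 * lam * c₁))).deriv
  have hder : ∀ j k : Fin n,
      deriv (fun s => b x j k * ellt3 lam c₁ ψ s x) t = b x j k * -(2 * lam * c₁) := by
    intro j k
    have h : (fun s => b x j k * ellt3 lam c₁ ψ s x)
        = fun s : ℝ => (b x j k * -(2 * lam * c₁)) * s := by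
      funext s
      rw [hellt s]
      ring
    rw [h]
    simpa using ((hasDerivAt_id t).const_mul (b x j k * -(2 * lam * c₁))).deriv
  -- spatial derivative of ell3
  have hellx : ∀ (j : Fin n) (y : EuclideanSpace ℝ (Fin n)),
      partialDeriv3 (ell3 lam c₁ ψ t) j y = lam * partialDeriv3 ψ j y := by
    intro j y
    unfold partialDeriv3 ell3
    have h : (fun z : EuclideanSpace ℝ (Fin n) => lam * (ψ z - c₁ * t ^ 2))
        = fun z => lam * ψ z - lam * (c₁ * t ^ 2) := by
      funext z; ring
    rw [h, fderiv_sub_const, fderiv_const_mul (hψdiff y)]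
    simp
  have hA : ∀ (j' k k' : Fin n),
      partialDeriv3 (fun y => b y j' k * partialDeriv3 (ell3 lam c₁ ψ t) j' y) k' x
        = lam * partialDeriv3 (fun y => b y j' k * partialDeriv3 ψ j' y) k' x := by
    intro j' k k'
    have h : (fun y => b y j' k * partialDeriv3 (ell3 lam c₁ ψ t) j' y)
        = fun y => lam * (b y j' k * partialDeriv3 ψ j' y) := by
      funext y
      rw [hellx j' y]
      ring
    rw [h]
    exact pd3_const_mul _ lam k' x (((hbd j' k).mul (hψd j')).differentiableAt)
  have hB2 : ∀ (j k j' k' : Fin n),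
      partialDeriv3 (fun y => b y j k * b y j' k' * partialDeriv3 (ell3 lam c₁ ψ t) j' y) k' x
        = lam * (b x j k * partialDeriv3 (fun y => b y j' k' * partialDeriv3 ψ j' y) k' x
            + partialDeriv3 (fun y => b y j k) k' x * (b x j' k' * partialDeriv3 ψ j' x)) := by
    intro j k j' k'
    have h : (fun y => b y j k * b y j' k' * partialDeriv3 (ell3 lam c₁ ψ t) j' y)
        = fun y => lam * (b y j k * (b y j' k' * partialDeriv3 ψ j' y)) := by
      funext y
      rw [hellx j' y]
      ring
    rw [h, pd3_const_mul (fun y => b y j k * (b y j' k' * partialDeriv3 ψ j' y)) lam k' x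
        (((hbd j k).mul ((hbd j' k').mul (hψd j'))).differentiableAt),
      pd3_mul (fun y => b y j k) (fun y => b y j' k' * partialDeriv3 ψ j' y) k' x ((hbd j k).differentiableAt)
        (((hbd j' k').mul (hψd j')).differentiableAt)]
  -- key pointwise identity
  have key : ∀ j k : Fin n, cjk3 b ψ lam c₀ c₁ t x j k
      = lam * (∑ j', ∑ k',
          (2 * b x j k' * partialDeriv3 (fun y => b y j' k * partialDeriv3 ψ j' y) k' x
            - partialDeriv3 (fun y => b y j k) k' x * b x j' k' * partialDeriv3 ψ j' x))
        + lam * (-(4 * c₁) - c₀) * b x j k := by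
    intro j k
    unfold cjk3 Psi3
    rw [helltt, hder]
    have e1 : (∑ j', ∑ k',
        (2 * b x j k' * partialDeriv3 (fun y => b y j' k * partialDeriv3 (ell3 lam c₁ ψ t) j' y) k' x
          - partialDeriv3 (fun y => b y j k * b y j' k' * partialDeriv3 (ell3 lam c₁ ψ t) j' y) k' x))
        = (∑ j', ∑ k', lam *
            (2 * b x j k' * partialDeriv3 (fun y => b y j' k * partialDeriv3 ψ j' y) k' x
              - partialDeriv3 (fun y => b y j k) k' x * b x j' k' * partialDeriv3 ψ j' x))
          - ∑ j', ∑ k', b x j k *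
              (lam * partialDeriv3 (fun y => b y j' k' * partialDeriv3 ψ j' y) k' x) := by
      rw [← sum2_sub]
      refine Finset.sum_congr rfl fun j' _ => Finset.sum_congr rfl fun k' _ => ?_
      rw [hA, hB2]
      ring
    rw [e1]
    simp only [hA]
    rw [sum2_mul, sum2_mul, sum2_mul]
    ring
  have hsum : ∑ j, ∑ k, cjk3 b ψ lam c₀ c₁ t x j k * ξ j * ξ k
      = lam * (∑ j, ∑ k, (∑ j', ∑ k',
          (2 * b x j k' * partialDeriv3 (fun y => b y j' k * partialDeriv3 ψ j' y) k' x
            - partialDeriv3 (fun y => b y j k) k' x * b x j' k' * partialDeriv3 ψ j' x))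
          * ξ j * ξ k)
        + lam * (-(4 * c₁) - c₀) * ∑ j, ∑ k, b x j k * ξ j * ξ k := by
    rw [Finset.mul_sum, Finset.mul_sum, ← Finset.sum_add_distrib]
    refine Finset.sum_congr rfl fun j _ => ?_
    rw [Finset.mul_sum, Finset.mul_sum, ← Finset.sum_add_distrib]
    refine Finset.sum_congr rfl fun k _ => ?_
    rw [key j k]
    ring
  rw [hsum]
  have h1 := hB1 x hx ξ
  have h2 := mul_le_mul_of_nonneg_left h1 hlam.le
  nlinarith [h2]
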